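/- Fix 0 < m < L, set κ = L/m, and let δ > 0. If s is a real number with m ≤ s ≤ (1+δ)m ≤ L (so that κ ≥ 1 + δ), then ρ(s, m) ≤ r_δ(κ), where r_δ(κ) = (√(κ−1)/√κ) · (√(κ−1) + √δ)/(√κ + √(1+δ)). -/

import Mathlib

/-- `β(s) = (√L − √s)/(√L + √s)`. -/
noncomputable def momBeta (L s : ℝ) : ℝ :=
  (Real.sqrt L - Real.sqrt s) / (Real.sqrt L + Real.sqrt s)

/-- The complex square root of a real number: `√x` if `x ≥ 0`, `i√(−x)` otherwise. -/
noncomputable def csqrt (x : ℝ) : ℂ :=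
  if 0 ≤ x then ((Real.sqrt x : ℝ) : ℂ) else Complex.I * ((Real.sqrt (-x) : ℝ) : ℂ)

/-- The discriminant `((1+β(s))²/4)(1 − ℓ/L)² − β(s)(1 − ℓ/L)`. -/
noncomputable def discr (L s ℓ : ℝ) : ℝ :=
  ((1 + momBeta L s) / 2) ^ 2 * (1 - ℓ / L) ^ 2 - momBeta L s * (1 - ℓ / L)

/-- The eigenvalue `((1+β(s))/2)(1 − ℓ/L) + sqrt(discriminant)` of `G(s, ℓ)`. -/
noncomputable def eigP (L s ℓ : ℝ) : ℂ :=
  (((1 + momBeta L s) / 2 * (1 - ℓ / L) : ℝ) : ℂ) + csqrt (discr L s ℓ)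

/-- The eigenvalue `((1+β(s))/2)(1 − ℓ/L) − sqrt(discriminant)` of `G(s, ℓ)`. -/
noncomputable def eigM (L s ℓ : ℝ) : ℂ :=
  (((1 + momBeta L s) / 2 * (1 - ℓ / L) : ℝ) : ℂ) - csqrt (discr L s ℓ)

/-- `ρ(s, ℓ)`: the maximum modulus of the two eigenvalues of `G(s, ℓ)`. -/
noncomputable def specRho (L s ℓ : ℝ) : ℝ :=
  max (‖eigP L s ℓ‖) (‖eigM L s ℓ‖)

/-- `r_δ(z) = (√(z−1)/√z)·(√(z−1) + √δ)/(√z + √(1+δ))`. -/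
noncomputable def rDelta (δ z : ℝ) : ℝ :=
  Real.sqrt (z - 1) / Real.sqrt z *
    ((Real.sqrt (z - 1) + Real.sqrt δ) / (Real.sqrt z + Real.sqrt (1 + δ)))

section stmt15aux

private lemma aux_lt_of_sq (u v : ℝ) (hu : 0 ≤ u) (hv : 0 < v) (h : u ^ 2 < v ^ 2) :
    u < v := by nlinarith

private lemma aux_le_of_sq (u v : ℝ) (hu : 0 ≤ u) (hv : 0 ≤ v) (h : u ^ 2 ≤ v ^ 2) :
    u ≤ v := by nlinarith

private lemma aux_ratio_mono (sL t₁ t₂ : ℝ) (hsL : 0 < sL) (h1 : 0 ≤ t₁) (h2 : t₁ ≤ t₂)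
    (hp : 0 < sL + t₂) :
    (sL - t₂) / (sL + t₂) ≤ (sL - t₁) / (sL + t₁) := by
  rw [div_le_div_iff₀ hp (by linarith)]
  nlinarith

private lemma aux_gr (sL sm b c e : ℝ) (hsL : 0 < sL) (hsm : 0 < sm)
    (he : 0 < e) (hc : 0 ≤ c) (hb1 : 1 ≤ b) (hesm : sL - sm ≤ e) (hcb1 : b - 1 ≤ c)
    (hee : e ^ 2 = sL ^ 2 - sm ^ 2) :
    (sL - sm) * (sL * (sL + b * sm)) ≤ e * (e + c * sm) * sL := by
  have key : (sL - sm) * (b - 1) ≤ e * c :=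
    mul_le_mul hesm hcb1 (by linarith) he.le
  nlinarith [mul_pos hsL hsm]

private lemma aux_r1 (sL sm b c e : ℝ) (hsm : 0 < sm) (heL : e ≤ sL) (hcb : c ≤ b)
    (he : 0 ≤ e) (hc : 0 ≤ c) :
    e * (e + c * sm) ≤ sL * (sL + b * sm) := by
  have hsL0 : 0 ≤ sL := he.trans heL
  have h1 : e * e ≤ sL * sL := mul_le_mul heL heL he hsL0
  have h2 : e * c ≤ sL * b := mul_le_mul heL hcb hc hsL0
  nlinarith [mul_le_mul_of_nonneg_right h2 hsm.le, h1]

private lemma aux_qr (rr xx bb Bb : ℝ) (hroot : rr ^ 2 - (1 + Bb) * xx * rr + Bb * xx = 0)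
    (hle : Bb ≤ bb) (hx : 0 ≤ xx) (hr : rr ≤ 1) :
    0 ≤ rr ^ 2 - (1 + bb) * xx * rr + bb * xx := by
  nlinarith [mul_nonneg (mul_nonneg (sub_nonneg.mpr hle) hx) (sub_nonneg.mpr hr)]

private lemma aux_sqdiff (u t : ℝ) (ht : 0 < t) (h2 : t ≤ u) : (u - t) ^ 2 ≤ u ^ 2 - t ^ 2 := by
  nlinarith

private lemma aux_h5 (r v w P : ℝ) (hqr : 0 ≤ r ^ 2 - 2 * v * r + P) (hw2 : w ^ 2 = v ^ 2 - P) :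
    w ^ 2 ≤ (r - v) ^ 2 := by nlinarith

private lemma aux_bx_le (bx g r : ℝ) (h1 : bx ≤ g ^ 2) (h2 : g ≤ r) (hg : 0 ≤ g) :
    bx ≤ r ^ 2 := by nlinarith

end stmt15aux

set_option maxHeartbeats 1000000 in
/-- (Lemma `la:lem:rho-leq-rhoeps`.) If
`m ≤ s ≤ (1+δ)m ≤ L`, then `ρ(s, m) ≤ r_δ(κ)` where `κ = L/m`. -/
theorem stmt15 {L m δ s : ℝ} (hm : 0 < m) (hmL : m < L) (hδ : 0 < δ)
    (hms : m ≤ s) (hsδ : s ≤ (1 + δ) * m) (hδL : (1 + δ) * m ≤ L) :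
    specRho L s m ≤ rDelta δ (L / m) := by
  have hL : 0 < L := hm.trans hmL
  have hs : 0 < s := lt_of_lt_of_le hm hms
  have hβrfl : momBeta L s = (Real.sqrt L - Real.sqrt s) / (Real.sqrt L + Real.sqrt s) := rfl
  set sL := Real.sqrt L with hsLd
  set sm := Real.sqrt m with hsmd
  set ss := Real.sqrt s with hssd
  set b := Real.sqrt (1 + δ) with hbd
  set c := Real.sqrt δ with hcd
  set e := Real.sqrt (L - m) with hed
  have hsL : 0 < sL := Real.sqrt_pos.mpr hL
  have hsm : 0 < sm := Real.sqrt_pos.mpr hm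
  have hsmL : sm < sL := Real.sqrt_lt_sqrt hm.le hmL
  have hss1 : sm ≤ ss := Real.sqrt_le_sqrt hms
  have hss2 : ss ≤ b * sm := by
    rw [hssd, hbd, hsmd, ← Real.sqrt_mul (by positivity)]
    exact Real.sqrt_le_sqrt hsδ
  have hbsL : b * sm ≤ sL := by
    rw [hbd, hsmd, hsLd, ← Real.sqrt_mul (by positivity)]
    exact Real.sqrt_le_sqrt hδL
  have hc : 0 < c := Real.sqrt_pos.mpr hδ
  have hbc : b ^ 2 = 1 + c ^ 2 := by
    rw [hbd, hcd, Real.sq_sqrt (by positivity), Real.sq_sqrt hδ.le]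
  have hb0 : 0 ≤ b := Real.sqrt_nonneg _
  have hb1 : 1 < b := aux_lt_of_sq 1 b (by norm_num)
    (by nlinarith [pow_pos hc 2, hbc, Real.sqrt_nonneg (1 + δ)])
    (by nlinarith [pow_pos hc 2, hbc])
  have he : 0 < e := Real.sqrt_pos.mpr (by linarith)
  have hee : e ^ 2 = sL ^ 2 - sm ^ 2 := by
    rw [hed, hsLd, hsmd, Real.sq_sqrt (by linarith), Real.sq_sqrt hL.le, Real.sq_sqrt hm.le]
  have hsm2 : sm ^ 2 = m := Real.sq_sqrt hm.le
  have hsL2 : sL ^ 2 = L := Real.sq_sqrt hL.le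
  have hssL : ss ≤ sL := le_trans hss2 hbsL
  set x : ℝ := 1 - m / L with hxd
  have hx : x = e ^ 2 / sL ^ 2 := by
    rw [hxd, hee, hsL2, hsm2]; field_simp
  have hx0 : 0 < x := by
    rw [hx]; exact div_pos (pow_pos he 2) (pow_pos hsL 2)
  set β := (sL - ss) / (sL + ss) with hβd
  have hβ : momBeta L s = β := hβrfl
  have hβ0 : 0 ≤ β := div_nonneg (by linarith) (by positivity)
  have hβm : β ≤ (sL - sm) / (sL + sm) := by
    rw [hβd]
    exact aux_ratio_mono sL sm ss hsL hsm.le hss1 (by linarith)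
  set Bδ := (sL - b * sm) / (sL + b * sm) with hBd
  have hBpos : 0 < sL + b * sm := by linarith [mul_pos (lt_trans one_pos hb1) hsm]
  have hβδ : Bδ ≤ β := by
    rw [hβd, hBd]
    exact aux_ratio_mono sL ss (b * sm) hsL (by linarith) hss2 hBpos
  have hrval : rDelta δ (L / m) = e / sL * ((e + c * sm) / (sL + b * sm)) := by
    rw [rDelta]
    have h1 : Real.sqrt (L / m) = sL / sm := by
      rw [hsLd, hsmd, Real.sqrt_div hL.le]
    have h2 : Real.sqrt (L / m - 1) = e / sm := by
      rw [show L / m - 1 = (L - m) / m by field_simp, hed, hsmd,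
        Real.sqrt_div (by linarith)]
    rw [h1, h2]
    field_simp
    rw [← hcd, ← hbd]; ring
  set r := e / sL * ((e + c * sm) / (sL + b * sm)) with hrd
  have hr0 : 0 ≤ r := by
    apply mul_nonneg (div_nonneg he.le hsL.le)
    exact div_nonneg (add_nonneg he.le (mul_nonneg hc.le hsm.le)) hBpos.le
  have heL : e < sL := aux_lt_of_sq e sL he.le hsL (by linarith [pow_pos hsm 2, hee])
  have hcb : c < b := aux_lt_of_sq c b hc.le (lt_trans one_pos hb1) (by linarith [hbc])
  have hr1 : r ≤ 1 := by
    rw [hrd, div_mul_div_comm, div_le_one (by positivity)]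
    exact aux_r1 sL sm b c e hsm heL.le hcb.le he.le hc.le
  have hesm : sL - sm ≤ e := aux_le_of_sq (sL - sm) e (by linarith) he.le
    (by linarith [aux_sqdiff sL sm hsm hsmL.le, hee])
  have hcb1 : b - 1 ≤ c := aux_le_of_sq (b - 1) c (by linarith) hc.le
    (by linarith [aux_sqdiff b 1 one_pos hb1.le, hbc, (one_pow 2 : (1:ℝ)^2 = 1)])
  have hgr : (sL - sm) / sL ≤ r := by
    rw [hrd, div_mul_div_comm, div_le_div_iff₀ hsL (by positivity)]
    exact aux_gr sL sm b c e hsL hsm he hc.le hb1.le hesm hcb1 hee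
  have hroot : r ^ 2 - (1 + Bδ) * x * r + Bδ * x = 0 := by
    have h1 : sL ≠ 0 := hsL.ne'
    have h2 : sL + b * sm ≠ 0 := hBpos.ne'
    have key : e^2*(e+c*sm)^2 - 2*e^3*(e+c*sm) + (sL^2 - b^2*sm^2)*e^2 = 0 := by
      linear_combination (-(e^2))*hee + (-(e^2*sm^2))*hbc
    have hq : r ^ 2 - (1 + Bδ) * x * r + Bδ * x
        = (e^2*(e+c*sm)^2 - 2*e^3*(e+c*sm) + (sL^2 - b^2*sm^2)*e^2) / (sL^2*(sL+b*sm)^2) := by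
      rw [hrd, hBd, hx]
      field_simp
      ring
    rw [hq, key, zero_div]
  have hg0 : 0 ≤ (sL - sm) / sL := div_nonneg (by linarith) hsL.le
  have hβx : β * x ≤ ((sL - sm) / sL) ^ 2 := by
    have h1 : β * x ≤ (sL - sm) / (sL + sm) * x :=
      mul_le_mul_of_nonneg_right hβm hx0.le
    have h2 : (sL - sm) / (sL + sm) * x = ((sL - sm) / sL) ^ 2 := by
      rw [hx, hee]; field_simp; ring
    linarith
  set v := (1 + β) / 2 * x with hvd
  have hv0 : 0 ≤ v := by
    rw [hvd]; apply mul_nonneg (by linarith) hx0.le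
  have hrv : v ≤ r := by
    have h2 : (1 + (sL - sm) / (sL + sm)) / 2 * x = (sL - sm) / sL := by
      rw [hx, hee]; field_simp; ring
    have h1 : v ≤ (1 + (sL - sm) / (sL + sm)) / 2 * x := by
      rw [hvd]; apply mul_le_mul_of_nonneg_right (by linarith) hx0.le
    linarith
  have hD : discr L s m = v ^ 2 - β * x := by
    simp only [discr, hβ, ← hxd, hvd]; ring
  have heP : eigP L s m = (v : ℂ) + csqrt (discr L s m) := by
    simp only [eigP, hβ, ← hxd, hvd]
  have heM : eigM L s m = (v : ℂ) - csqrt (discr L s m) := by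
    simp only [eigM, hβ, ← hxd, hvd]
  rw [hrval]
  rw [specRho]
  by_cases hDpos : 0 ≤ discr L s m
  · have hcs : csqrt (discr L s m) = ((Real.sqrt (discr L s m) : ℝ) : ℂ) := by
      rw [csqrt, if_pos hDpos]
    set w := Real.sqrt (discr L s m) with hwd
    have hw0 : 0 ≤ w := Real.sqrt_nonneg _
    have hw2 : w ^ 2 = v ^ 2 - β * x := by rw [hwd, Real.sq_sqrt hDpos, hD]
    have hqr : 0 ≤ r ^ 2 - (1 + β) * x * r + β * x :=
      aux_qr r x β Bδ hroot hβδ hx0.le hr1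
    have h2v : (1 + β) * x = 2 * v := by rw [hvd]; ring
    have h5 : w ^ 2 ≤ (r - v) ^ 2 := by
      rw [h2v] at hqr
      exact aux_h5 r v w (β * x) hqr hw2
    have hsub : w ≤ r - v := aux_le_of_sq w (r - v) hw0 (by linarith) h5
    have habsP : ‖eigP L s m‖ = v + w := by
      rw [heP, hcs, show ((v : ℂ) + (w : ℂ)) = ((v + w : ℝ) : ℂ) by push_cast; ring,
        Complex.norm_real, Real.norm_eq_abs, abs_of_nonneg (by linarith)]
    have habsM : ‖eigM L s m‖ = |v - w| := by
      rw [heM, hcs, show ((v : ℂ) - (w : ℂ)) = ((v - w : ℝ) : ℂ) by push_cast; ring,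
        Complex.norm_real, Real.norm_eq_abs]
    apply max_le
    · rw [habsP]; linarith
    · rw [habsM, abs_le]
      constructor <;> linarith
  · have hDneg : discr L s m < 0 := not_le.mp hDpos
    have hcs : csqrt (discr L s m) = Complex.I * ((Real.sqrt (-(discr L s m)) : ℝ) : ℂ) := by
      rw [csqrt, if_neg hDpos]
    set w := Real.sqrt (-(discr L s m)) with hwd
    have hw2 : w ^ 2 = β * x - v ^ 2 := by
      rw [hwd, Real.sq_sqrt (by linarith), hD]; ring
    have hkey : Real.sqrt (v ^ 2 + w ^ 2) ≤ r := by
      have h1 : v ^ 2 + w ^ 2 = β * x := by linarith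
      have h6 : β * x ≤ r ^ 2 := aux_bx_le (β * x) ((sL - sm) / sL) r hβx hgr hg0
      rw [h1]
      calc Real.sqrt (β * x) ≤ Real.sqrt (r ^ 2) := Real.sqrt_le_sqrt h6
        _ = r := Real.sqrt_sq hr0
    have habsP : ‖eigP L s m‖ = Real.sqrt (v ^ 2 + w ^ 2) := by
      rw [heP, hcs,
        show ((v : ℂ) + Complex.I * (w : ℂ)) = ((v : ℝ) : ℂ) + ((w : ℝ) : ℂ) * Complex.I by ring,
        Complex.norm_add_mul_I]
    have habsM : ‖eigM L s m‖ = Real.sqrt (v ^ 2 + w ^ 2) := by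
      rw [heM, hcs,
        show ((v : ℂ) - Complex.I * (w : ℂ)) = ((v : ℝ) : ℂ) + (((-w : ℝ)) : ℂ) * Complex.I by
          push_cast; ring,
        Complex.norm_add_mul_I]
      congr 1; ring
    apply max_le
    · rw [habsP]; exact hkey
    · rw [habsM]; exact hkey
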